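/- Let f : ℂ → ℂ be a function, let α ∈ ℝ, ε ∈ (0,1) and δ > 0, and suppose that |f(z) − e^{iα}·z| < ε·|z| for every z ∈ ℂ with |z| < δ. Let z = r·e^{iθ} with 0 < r < δ and θ ∈ ℝ, and set r' = |f(z)|. Then there exists a unique real number θ' such that: (1) f(z) = r'·e^{iθ'}; (2) |r' − r| < ε·r; and (3) |θ' − (θ + α)| < (π/2)·ε. -/

import Mathlib

open Complex Real

/-- Polar estimate near an elliptic fixed point: if `|f(z) − e^{iα}z| < ε·|z|` for all
`|z| < δ`, and `z = r·e^{iθ}` with `0 < r < δ`, then there is a unique real `θ'` with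
`f(z) = |f(z)|·e^{iθ'}`, `||f(z)| − r| < ε·r` and `|θ' − (θ + α)| < (π/2)·ε`. -/
theorem polar_estimate_elliptic
    (f : ℂ → ℂ) (α ε δ : ℝ) (hε0 : 0 < ε) (hε1 : ε < 1) (hδ : 0 < δ)
    (hf : ∀ z : ℂ, ‖z‖ < δ →
      ‖f z - Complex.exp (α * Complex.I) * z‖ < ε * ‖z‖)
    (r θ : ℝ) (hr0 : 0 < r) (hrδ : r < δ)
    (z : ℂ) (hz : z = (r : ℂ) * Complex.exp (θ * Complex.I)) :
    ∃! θ' : ℝ,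
      f z = ((‖f z‖ : ℝ) : ℂ) * Complex.exp (θ' * Complex.I) ∧
      |‖f z‖ - r| < ε * r ∧
      |θ' - (θ + α)| < π / 2 * ε := by
  have hπ : (0:ℝ) < π := Real.pi_pos
  have habsz : ‖z‖ = r := by
    rw [hz]; simp [Complex.norm_exp, abs_of_pos hr0]
  have hclose : ‖f z - Complex.exp (α * Complex.I) * z‖ < ε * r := by
    have := hf z (by rw [habsz]; exact hrδ); rwa [habsz] at this
  have hEz : Complex.exp (α * Complex.I) * z = (r : ℂ) * Complex.exp (((θ + α) : ℝ) * Complex.I) := by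
    rw [hz, mul_left_comm, ← Complex.exp_add]
    congr 2
    push_cast; ring
  have habsEz : ‖Complex.exp (α * Complex.I) * z‖ = r := by
    rw [hEz]; simp [Complex.norm_exp, abs_of_pos hr0]
  have hrad : |‖f z‖ - r| < ε * r := by
    have h1 : |‖f z‖ - ‖Complex.exp (α * Complex.I) * z‖| ≤ ‖f z - Complex.exp (α * Complex.I) * z‖ :=
      abs_norm_sub_norm_le _ _
    rw [habsEz] at h1
    exact lt_of_le_of_lt h1 hclose
  have hfz_pos : 0 < ‖f z‖ := by
    have := abs_sub_lt_iff.mp hrad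
    nlinarith [this.2]
  have hfz_ne : f z ≠ 0 := by
    intro h; rw [h] at hfz_pos; simp at hfz_pos
  set u : ℂ := f z * Complex.exp ((-(θ + α) : ℝ) * Complex.I) with hu
  have habsu : ‖u‖ = ‖f z‖ := by
    simp [hu, Complex.norm_exp]
  have hu_ne : u ≠ 0 := by
    simp [hu, hfz_ne, Complex.exp_ne_zero]
  have hcancel : Complex.exp (((θ + α) : ℝ) * Complex.I) *
      Complex.exp ((-(θ + α) : ℝ) * Complex.I) = 1 := by
    rw [← Complex.exp_add, ← Complex.exp_zero]
    congr 1
    push_cast; ring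
  have hur : ‖u - (r:ℂ)‖ < ε * r := by
    have heq : u - (r:ℂ) = (f z - Complex.exp (α * Complex.I) * z) *
        Complex.exp ((-(θ + α) : ℝ) * Complex.I) := by
      rw [sub_mul, hEz, mul_assoc, hcancel, mul_one, hu]
    rw [heq]
    simpa [Complex.norm_exp] using hclose
  have hreu : 0 < u.re := by
    have him : |(u - (r:ℂ)).re| ≤ ‖u - (r:ℂ)‖ := Complex.abs_re_le_norm _
    simp only [Complex.sub_re, Complex.ofReal_re] at him
    have := abs_sub_lt_iff.mp (lt_of_le_of_lt him hur)
    nlinarith [this.2]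
  set a := Complex.arg u with ha
  have haπ2 : |a| < π / 2 := Complex.abs_arg_lt_pi_div_two_iff.mpr (Or.inl hreu)
  have hsin : ‖u‖ * Real.sin a = u.im := Complex.norm_mul_sin_arg u
  have hcos : ‖u‖ * Real.cos a = u.re := Complex.norm_mul_cos_arg u
  have hsq : ‖u - (r:ℂ)‖^2 =
      (‖u‖)^2 - 2 * ‖u‖ * r * Real.cos a + r^2 := by
    rw [Complex.sq_norm, Complex.normSq_apply]
    simp only [Complex.sub_re, Complex.sub_im, Complex.ofReal_re, Complex.ofReal_im]
    nlinarith [hsin, hcos, Real.sin_sq_add_cos_sq a, Complex.sq_norm u, Complex.normSq_apply u]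
  have hsinε : |Real.sin a| < ε := by
    have key : (r * Real.sin a)^2 ≤ ‖u - (r:ℂ)‖^2 := by
      rw [hsq]
      nlinarith [Real.sin_sq_add_cos_sq a, sq_nonneg (‖u‖ - r * Real.cos a)]
    have h3 : r * |Real.sin a| ≤ ‖u - (r:ℂ)‖ := by
      have h2 : (r * |Real.sin a|)^2 ≤ (‖u - (r:ℂ)‖)^2 := by
        rw [mul_pow, _root_.sq_abs, ← mul_pow]
        exact key
      exact (pow_le_pow_iff_left₀ (by positivity) (norm_nonneg _) two_ne_zero).mp h2
    have h5 : r * |Real.sin a| < r * ε := by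
      have := lt_of_le_of_lt h3 hur
      linarith [this]
    exact (mul_lt_mul_iff_right₀ hr0).mp h5
  have hangle : |a| < π / 2 * ε := by
    rcases eq_or_lt_of_le (abs_nonneg a) with h0 | h0
    · rw [← h0]; positivity
    · have hj : 2 / π * |a| < Real.sin |a| := Real.mul_lt_sin h0 haπ2
      have hle : Real.sin |a| ≤ |Real.sin a| := by
        rcases abs_cases a with ⟨h1, _⟩ | ⟨h1, _⟩
        · rw [h1]; exact le_abs_self _
        · rw [h1, Real.sin_neg, ← abs_neg (Real.sin a)]; exact le_abs_self _
      have h4 : 2 / π * |a| < ε := lt_of_lt_of_le (lt_of_lt_of_le hj hle) hsinε.le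
      calc |a| = π / 2 * (2 / π * |a|) := by field_simp
        _ < π / 2 * ε := by apply mul_lt_mul_of_pos_left h4; positivity
  have hfz_polar : f z = ((‖f z‖ : ℝ) : ℂ) *
      Complex.exp (((θ + α + a) : ℝ) * Complex.I) := by
    have h1 : u = ((‖f z‖ : ℝ) : ℂ) * Complex.exp ((a : ℝ) * Complex.I) := by
      rw [← habsu]; exact (Complex.norm_mul_exp_arg_mul_I u).symm
    have h2 : f z = u * Complex.exp (((θ + α) : ℝ) * Complex.I) := by
      rw [hu, mul_assoc, mul_comm (Complex.exp ((-(θ + α) : ℝ) * Complex.I)), hcancel, mul_one]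
    calc f z = u * Complex.exp (((θ + α) : ℝ) * Complex.I) := h2
      _ = (((‖f z‖ : ℝ) : ℂ) * Complex.exp ((a : ℝ) * Complex.I)) *
          Complex.exp (((θ + α) : ℝ) * Complex.I) := by rw [← h1]
      _ = ((‖f z‖ : ℝ) : ℂ) * Complex.exp (((θ + α + a) : ℝ) * Complex.I) := by
          rw [mul_assoc, ← Complex.exp_add]
          congr 2
          push_cast; ring
  clear_value a
  clear_value u
  refine ⟨θ + α + a, ⟨?_, hrad, ?_⟩, ?_⟩
  · exact hfz_polar
  · simpa using hangle
  · rintro θ₂ ⟨hpol2, _, hang2⟩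
    have hexp : Complex.exp (((θ₂ : ℝ) : ℂ) * Complex.I) =
        Complex.exp (((θ + α + a : ℝ) : ℂ) * Complex.I) := by
      have hne : ((‖f z‖ : ℝ) : ℂ) ≠ 0 := by
        exact_mod_cast ne_of_gt hfz_pos
      exact mul_left_cancel₀ hne (hpol2.symm.trans hfz_polar)
    have hex1 : ∃ n : ℤ, ((θ₂ : ℝ) : ℂ) * Complex.I - ((θ + α + a : ℝ) : ℂ) * Complex.I
        = n * (2 * π * Complex.I) := by
      rw [← Complex.exp_eq_one_iff, Complex.exp_sub, hexp, div_self (Complex.exp_ne_zero _)]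
    obtain ⟨n, hn⟩ := hex1
    have hreal : θ₂ - (θ + α + a) = n * (2 * π) := by
      have h := congrArg Complex.im hn
      simpa using h
    have hn0 : n = 0 := by
      by_contra hn0
      have h1 : (1:ℝ) ≤ |(n:ℝ)| := by
        exact_mod_cast Int.one_le_abs (by exact_mod_cast hn0)
      have hb : |θ₂ - (θ + α + a)| < π * ε := by
        calc |θ₂ - (θ + α + a)| = |(θ₂ - (θ + α)) + (-a)| := by ring_nf
          _ ≤ |θ₂ - (θ + α)| + |(-a)| := abs_add_le _ _
          _ < π / 2 * ε + π / 2 * ε := by rw [abs_neg]; exact add_lt_add hang2 hangle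
          _ = π * ε := by ring
      rw [hreal, abs_mul, abs_of_pos (by positivity : (0:ℝ) < 2 * π)] at hb
      have h2 : 2 * π ≤ |(n:ℝ)| * (2 * π) :=
        le_mul_of_one_le_left (by positivity) h1
      have h3 : π * ε < π := mul_lt_of_lt_one_right hπ hε1
      linarith only [h2, hb, h3, hπ]
    have : θ₂ - (θ + α + a) = 0 := by rw [hreal, hn0]; simp
    linarith
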